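/- Let X be a finite metric space and let 𝒳, 𝒴, 𝒵 be families of finite metric spaces, and let α, β ≥ 1. Suppose X admits a stochastic α-embedding into ⊕₁(𝒳 ∪ 𝒴), and every member of 𝒳 admits a stochastic β-embedding into 𝒵. Then X admits a stochastic (α·β)-embedding into ⊕₁(𝒵 ∪ 𝒴). -/

import Mathlib

open Set

noncomputable section

/-- A bundled finite metric space. -/
structure FinMetric where
  carrier : Type
  fintype : Fintype carrier
  metric : MetricSpace carrier

/-- The distance function of a bundled finite metric space. -/
def FinMetric.dist (Y : FinMetric) (x y : Y.carrier) : ℝ :=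
  @Dist.dist Y.carrier Y.metric.toDist x y

/-- `StochEmbed X dX 𝒴 D`: the metric space `(X, dX)` admits a stochastic `D`-embedding
into the family `𝒴` of finite metric spaces, i.e. there are finitely many spaces
`Y i ∈ 𝒴`, non-contracting maps `f i : X → Y i` and weights `p i ≥ 0` summing to `1`
such that `∑ i, p i * dist (f i x) (f i y) ≤ D * dX x y` for all `x y`. -/
def StochEmbed (X : Type) (dX : X → X → ℝ) (𝒴 : Set FinMetric) (D : ℝ) : Prop :=
  ∃ (N : ℕ) (Y : Fin N → FinMetric) (f : ∀ i, X → (Y i).carrier) (p : Fin N → ℝ),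
    (∀ i, Y i ∈ 𝒴) ∧ (∀ i, 0 ≤ p i) ∧ (∑ i, p i) = 1 ∧
    (∀ i (x y : X), dX x y ≤ (Y i).dist (f i x) (f i y)) ∧
    (∀ x y : X, (∑ i, p i * (Y i).dist (f i x) (f i y)) ≤ D * dX x y)

/-- The four-point condition: `Y` is a tree metric. -/
def FourPoint (Y : FinMetric) : Prop :=
  ∀ w x y z : Y.carrier,
    Y.dist w x + Y.dist y z ≤ max (Y.dist w y + Y.dist x z) (Y.dist w z + Y.dist x y)

/-- The family of finite tree metrics. -/
def TreeMetrics : Set FinMetric := {Y | FourPoint Y}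

/-- `IsOneSum Z Y₁ Y₂`: `Z` is (isometric to) a 1-sum of `Y₁` and `Y₂`: it is obtained
from the disjoint union of `Y₁` and `Y₂` by identifying a basepoint `v₁ ∈ Y₁` with a
basepoint `v₂ ∈ Y₂`, distances within each part being unchanged, and
`dist x y = d₁ x v₁ + d₂ v₂ y` for `x ∈ Y₁`, `y ∈ Y₂`. -/
def IsOneSum (Z Y₁ Y₂ : FinMetric) : Prop :=
  ∃ (g₁ : Y₁.carrier → Z.carrier) (g₂ : Y₂.carrier → Z.carrier)
    (v₁ : Y₁.carrier) (v₂ : Y₂.carrier),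
    Function.Injective g₁ ∧ Function.Injective g₂ ∧
    (∀ z : Z.carrier, (∃ x, g₁ x = z) ∨ (∃ y, g₂ y = z)) ∧
    g₁ v₁ = g₂ v₂ ∧
    (∀ x y, g₁ x = g₂ y → x = v₁ ∧ y = v₂) ∧
    (∀ x y, Z.dist (g₁ x) (g₁ y) = Y₁.dist x y) ∧
    (∀ x y, Z.dist (g₂ x) (g₂ y) = Y₂.dist x y) ∧
    (∀ x y, Z.dist (g₁ x) (g₂ y) = Y₁.dist x v₁ + Y₂.dist v₂ y)

/-- `OneSumClosure 𝒳` is the smallest family of finite metric spaces containing `𝒳`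
and closed under taking 1-sums (denoted `⊕₁𝒳`). -/
inductive OneSumClosure (𝒳 : Set FinMetric) : FinMetric → Prop
  | base {Y : FinMetric} : Y ∈ 𝒳 → OneSumClosure 𝒳 Y
  | sum {Y₁ Y₂ Z : FinMetric} :
      OneSumClosure 𝒳 Y₁ → OneSumClosure 𝒳 Y₂ → IsOneSum Z Y₁ Y₂ → OneSumClosure 𝒳 Z

lemma FinMetric.dist_self (Y : FinMetric) (x : Y.carrier) : Y.dist x x = 0 :=
  @_root_.dist_self _ Y.metric.toPseudoMetricSpace x

lemma FinMetric.dist_comm (Y : FinMetric) (x y : Y.carrier) : Y.dist x y = Y.dist y x :=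
  @_root_.dist_comm _ Y.metric.toPseudoMetricSpace x y

lemma FinMetric.dist_triangle (Y : FinMetric) (x y z : Y.carrier) :
    Y.dist x z ≤ Y.dist x y + Y.dist y z :=
  @_root_.dist_triangle _ Y.metric.toPseudoMetricSpace x y z

lemma FinMetric.dist_nonneg (Y : FinMetric) (x y : Y.carrier) : 0 ≤ Y.dist x y :=
  @_root_.dist_nonneg _ Y.metric.toPseudoMetricSpace x y

lemma FinMetric.eq_of_dist_eq_zero (Y : FinMetric) {x y : Y.carrier}
    (h : Y.dist x y = 0) : x = y :=
  @_root_.eq_of_dist_eq_zero _ Y.metric x y h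

/-- carrier of the one-sum -/
def OSCar (Z₁ Z₂ : FinMetric) (w₂ : Z₂.carrier) : Type :=
  Z₁.carrier ⊕ {x : Z₂.carrier // x ≠ w₂}

def osdist (Z₁ Z₂ : FinMetric) (w₁ : Z₁.carrier) (w₂ : Z₂.carrier) :
    OSCar Z₁ Z₂ w₂ → OSCar Z₁ Z₂ w₂ → ℝ
  | .inl a, .inl b => Z₁.dist a b
  | .inl a, .inr b => Z₁.dist a w₁ + Z₂.dist w₂ b.1
  | .inr a, .inl b => Z₂.dist a.1 w₂ + Z₁.dist w₁ b
  | .inr a, .inr b => Z₂.dist a.1 b.1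

def oneSum (Z₁ Z₂ : FinMetric) (w₁ : Z₁.carrier) (w₂ : Z₂.carrier) : FinMetric where
  carrier := OSCar Z₁ Z₂ w₂
  fintype := by
    classical
    letI := Z₁.fintype; letI := Z₂.fintype
    unfold OSCar; infer_instance
  metric :=
    { dist := osdist Z₁ Z₂ w₁ w₂
      dist_self := by rintro (a | a) <;> simp [osdist, FinMetric.dist_self]
      dist_comm := by
        rintro (a | a) (b | b) <;>
          simp [osdist, FinMetric.dist_comm] <;> ring
      dist_triangle := by
        have t₁ := Z₁.dist_triangle
        have t₂ := Z₂.dist_triangle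
        have n₁ := Z₁.dist_nonneg
        have n₂ := Z₂.dist_nonneg
        rintro (a | a) (b | b) (c | c) <;> simp only [osdist]
        · exact t₁ a b c
        · linarith [t₁ a b w₁]
        · linarith [t₁ a w₁ c, n₂ w₂ b.1, n₂ b.1 w₂]
        · linarith [t₂ w₂ b.1 c.1]
        · linarith [t₁ w₁ b c]
        · linarith [t₂ a.1 w₂ c.1, n₁ w₁ b, n₁ b w₁]
        · linarith [t₂ a.1 b.1 w₂]
        · exact t₂ a.1 b.1 c.1
      eq_of_dist_eq_zero := by
        rintro (a | a) (b | b) h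
        · simp only [osdist] at h; rw [Z₁.eq_of_dist_eq_zero h]
        · exfalso
          simp only [osdist] at h
          have h1 : Z₂.dist w₂ b.1 = 0 := by
            have := Z₁.dist_nonneg a w₁; have := Z₂.dist_nonneg w₂ b.1; linarith
          exact b.2 (Z₂.eq_of_dist_eq_zero h1).symm
        · exfalso
          simp only [osdist] at h
          have h1 : Z₂.dist a.1 w₂ = 0 := by
            have := Z₁.dist_nonneg w₁ b; have := Z₂.dist_nonneg a.1 w₂; linarith
          exact a.2 (Z₂.eq_of_dist_eq_zero h1)
        · simp only [osdist] at h
          exact congrArg Sum.inr (Subtype.ext (Z₂.eq_of_dist_eq_zero h)) }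


lemma stochEmbed_of_index {X : Type} {dX : X → X → ℝ} {𝒴 : Set FinMetric} {D : ℝ}
    (ι : Type) [Fintype ι] (Y : ι → FinMetric) (f : ∀ i, X → (Y i).carrier) (p : ι → ℝ)
    (hY : ∀ i, Y i ∈ 𝒴) (hp : ∀ i, 0 ≤ p i) (hsum : ∑ i, p i = 1)
    (hnc : ∀ i x y, dX x y ≤ (Y i).dist (f i x) (f i y))
    (havg : ∀ x y, ∑ i, p i * (Y i).dist (f i x) (f i y) ≤ D * dX x y) :
    StochEmbed X dX 𝒴 D := by
  classical
  let e := (Fintype.equivFin ι).symm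
  refine ⟨Fintype.card ι, fun k => Y (e k), fun k => f (e k), fun k => p (e k),
    fun k => hY _, fun k => hp _, ?_, fun k => hnc _, ?_⟩
  · rw [Equiv.sum_comp e p, hsum]
  · intro x y
    rw [Equiv.sum_comp e (fun i => p i * (Y i).dist (f i x) (f i y))]
    exact havg x y

/-- Embedding of `Z₂` into the one-sum. -/
def osInr (Z₁ Z₂ : FinMetric) (w₁ : Z₁.carrier) (w₂ : Z₂.carrier) (y : Z₂.carrier) :
    (oneSum Z₁ Z₂ w₁ w₂).carrier :=
  @dite _ (y = w₂) (Classical.dec _) (fun _ => Sum.inl w₁) (fun h => Sum.inr ⟨y, h⟩)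

variable {Z₁ Z₂ : FinMetric} {w₁ : Z₁.carrier} {w₂ : Z₂.carrier}

lemma osInr_of_eq {y : Z₂.carrier} (h : y = w₂) :
    osInr Z₁ Z₂ w₁ w₂ y = (Sum.inl w₁ : OSCar Z₁ Z₂ w₂) := by
  unfold osInr; exact dif_pos h

lemma osInr_of_ne {y : Z₂.carrier} (h : ¬ y = w₂) :
    osInr Z₁ Z₂ w₁ w₂ y = (Sum.inr ⟨y, h⟩ : OSCar Z₁ Z₂ w₂) := by
  unfold osInr; exact dif_neg h

lemma oneSum_dist_inl_inl (a b : Z₁.carrier) :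
    (oneSum Z₁ Z₂ w₁ w₂).dist (Sum.inl a) (Sum.inl b) = Z₁.dist a b := rfl

lemma oneSum_dist_inl_osInr (a : Z₁.carrier) (y : Z₂.carrier) :
    (oneSum Z₁ Z₂ w₁ w₂).dist (Sum.inl a) (osInr Z₁ Z₂ w₁ w₂ y)
      = Z₁.dist a w₁ + Z₂.dist w₂ y := by
  by_cases h : y = w₂
  · rw [osInr_of_eq h]
    subst h
    show Z₁.dist a w₁ = _
    rw [Z₂.dist_self, add_zero]
  · rw [osInr_of_ne h]; rfl

lemma oneSum_dist_osInr_inl (y : Z₂.carrier) (a : Z₁.carrier) :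
    (oneSum Z₁ Z₂ w₁ w₂).dist (osInr Z₁ Z₂ w₁ w₂ y) (Sum.inl a)
      = Z₂.dist y w₂ + Z₁.dist w₁ a := by
  rw [(oneSum Z₁ Z₂ w₁ w₂).dist_comm (osInr Z₁ Z₂ w₁ w₂ y) (Sum.inl a), oneSum_dist_inl_osInr,
    Z₁.dist_comm, Z₂.dist_comm, add_comm]

lemma oneSum_dist_osInr_osInr (x y : Z₂.carrier) :
    (oneSum Z₁ Z₂ w₁ w₂).dist (osInr Z₁ Z₂ w₁ w₂ x) (osInr Z₁ Z₂ w₁ w₂ y)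
      = Z₂.dist x y := by
  by_cases h1 : x = w₂ <;> by_cases h2 : y = w₂
  · rw [osInr_of_eq h1, osInr_of_eq h2, h1, h2, Z₂.dist_self]
    exact Z₁.dist_self w₁
  · rw [osInr_of_eq h1, osInr_of_ne h2, h1]
    show Z₁.dist w₁ w₁ + Z₂.dist w₂ y = _
    rw [Z₁.dist_self, zero_add]
  · rw [osInr_of_ne h1, osInr_of_eq h2, h2]
    show Z₂.dist x w₂ + Z₁.dist w₁ w₁ = _
    rw [Z₁.dist_self, add_zero]
  · rw [osInr_of_ne h1, osInr_of_ne h2]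
    rfl

lemma isOneSum_oneSum (Z₁ Z₂ : FinMetric) (w₁ : Z₁.carrier) (w₂ : Z₂.carrier) :
    IsOneSum (oneSum Z₁ Z₂ w₁ w₂) Z₁ Z₂ := by
  refine ⟨Sum.inl, osInr Z₁ Z₂ w₁ w₂, w₁, w₂, fun a b h => Sum.inl.inj h, ?_, ?_, ?_, ?_,
    fun a b => oneSum_dist_inl_inl a b, fun a b => oneSum_dist_osInr_osInr a b,
    fun a b => oneSum_dist_inl_osInr a b⟩
  · intro a b h
    have := oneSum_dist_osInr_osInr (w₁ := w₁) (w₂ := w₂) a b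
    rw [h, (oneSum Z₁ Z₂ w₁ w₂).dist_self] at this
    exact Z₂.eq_of_dist_eq_zero this.symm
  · rintro (a | a)
    · by_cases h : a = w₁
      · subst h
        right; exact ⟨w₂, osInr_of_eq rfl⟩
      · left; exact ⟨a, rfl⟩
    · right
      exact ⟨a.1, osInr_of_ne a.2⟩
  · exact (osInr_of_eq rfl).symm
  · intro x y h
    by_cases hy : y = w₂
    · rw [osInr_of_eq hy] at h
      exact ⟨Sum.inl.inj h, hy⟩
    · rw [osInr_of_ne hy] at h
      exact absurd h (by simp)

lemma prod_sum_helper {N₁ N₂ : ℕ} {p₁ : Fin N₁ → ℝ} {p₂ : Fin N₂ → ℝ}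
    (hs₁ : ∑ i, p₁ i = 1) (hs₂ : ∑ j, p₂ j = 1) (A : Fin N₁ → ℝ) (B : Fin N₂ → ℝ) :
    ∑ ij : Fin N₁ × Fin N₂, p₁ ij.1 * p₂ ij.2 * (A ij.1 + B ij.2)
      = ∑ i, p₁ i * A i + ∑ j, p₂ j * B j := by
  rw [Fintype.sum_prod_type]
  have expand : ∀ (i : Fin N₁) (j : Fin N₂),
      p₁ i * p₂ j * (A i + B j) = (p₁ i * A i) * p₂ j + p₁ i * (p₂ j * B j) := by
    intro i j; ring
  simp_rw [expand, Finset.sum_add_distrib, ← Finset.mul_sum, ← Finset.sum_mul, hs₂, hs₁,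
    mul_one, one_mul]

lemma key_lemma (𝒳 𝒴 𝒵 : Set FinMetric) (β : ℝ) (hβ : 1 ≤ β)
    (h𝒳 : ∀ Y ∈ 𝒳, StochEmbed Y.carrier Y.dist 𝒵 β) :
    ∀ W : FinMetric, OneSumClosure (𝒳 ∪ 𝒴) W →
      StochEmbed W.carrier W.dist {Z | OneSumClosure (𝒵 ∪ 𝒴) Z} β := by
  intro W hW
  induction hW with
  | @base W h =>
    rcases h with h | h
    · obtain ⟨N, Y, f, p, hY, hp, hs, hnc, hav⟩ := h𝒳 W h
      exact ⟨N, Y, f, p, fun i => OneSumClosure.base (Or.inl (hY i)), hp, hs, hnc, hav⟩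
    · refine ⟨1, fun _ => W, fun _ => id, fun _ => 1,
        fun _ => OneSumClosure.base (Or.inr h), fun _ => zero_le_one, by simp, ?_, ?_⟩
      · intro i x y; exact le_refl _
      · intro x y
        simp only [id_eq, one_mul, Finset.sum_const, Finset.card_univ, Fintype.card_fin,
          one_smul]
        exact le_mul_of_one_le_left (W.dist_nonneg x y) hβ
  | @sum Y₁ Y₂ W h1 h2 hos ih1 ih2 =>
    obtain ⟨g₁, g₂, v₁, v₂, hinj₁, hinj₂, hcov, hglue, hmeet, hd₁, hd₂, hd₁₂⟩ := hos
    obtain ⟨N₁, Z₁, f₁, p₁, hZ₁, hp₁, hs₁, hnc₁, hav₁⟩ := ih1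
    obtain ⟨N₂, Z₂, f₂, p₂, hZ₂, hp₂, hs₂, hnc₂, hav₂⟩ := ih2
    classical
    -- decomposition data
    set S : Fin N₁ × Fin N₂ → FinMetric :=
      fun ij => oneSum (Z₁ ij.1) (Z₂ ij.2) (f₁ ij.1 v₁) (f₂ ij.2 v₂) with hS
    set F : ∀ ij : Fin N₁ × Fin N₂, W.carrier → (S ij).carrier :=
      fun ij z =>
        if h : ∃ x, g₁ x = z then Sum.inl (f₁ ij.1 h.choose)
        else osInr (Z₁ ij.1) (Z₂ ij.2) (f₁ ij.1 v₁) (f₂ ij.2 v₂)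
          (f₂ ij.2 ((hcov z).resolve_left h).choose) with hF
    -- case distance computations
    have distF : ∀ (ij : Fin N₁ × Fin N₂) (z z' : W.carrier),
        (S ij).dist (F ij z) (F ij z') =
          (if h : ∃ x, g₁ x = z then
            (if h' : ∃ x, g₁ x = z' then
              (Z₁ ij.1).dist (f₁ ij.1 h.choose) (f₁ ij.1 h'.choose)
            else (Z₁ ij.1).dist (f₁ ij.1 h.choose) (f₁ ij.1 v₁)
              + (Z₂ ij.2).dist (f₂ ij.2 v₂) (f₂ ij.2 ((hcov z').resolve_left h').choose))
          else
            (if h' : ∃ x, g₁ x = z' then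
              (Z₂ ij.2).dist (f₂ ij.2 ((hcov z).resolve_left h).choose) (f₂ ij.2 v₂)
              + (Z₁ ij.1).dist (f₁ ij.1 v₁) (f₁ ij.1 h'.choose)
            else (Z₂ ij.2).dist (f₂ ij.2 ((hcov z).resolve_left h).choose)
              (f₂ ij.2 ((hcov z').resolve_left h').choose))) := by
      intro ij z z'
      by_cases h : ∃ x, g₁ x = z <;> by_cases h' : ∃ x, g₁ x = z' <;>
        simp only [hF, h, h', dif_pos, dif_neg, not_false_iff]
      · erw [dif_pos h, dif_pos h']; exact oneSum_dist_inl_inl _ _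
      · erw [dif_pos h, dif_neg h']; exact oneSum_dist_inl_osInr _ _
      · erw [dif_neg h, dif_pos h']; exact oneSum_dist_osInr_inl _ _
      · erw [dif_neg h, dif_neg h']; exact oneSum_dist_osInr_osInr _ _
    have distW : ∀ (z z' : W.carrier),
        W.dist z z' =
          (if h : ∃ x, g₁ x = z then
            (if h' : ∃ x, g₁ x = z' then Y₁.dist h.choose h'.choose
            else Y₁.dist h.choose v₁ + Y₂.dist v₂ ((hcov z').resolve_left h').choose)
          else
            (if h' : ∃ x, g₁ x = z' then
              Y₂.dist ((hcov z).resolve_left h).choose v₂ + Y₁.dist v₁ h'.choose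
            else Y₂.dist ((hcov z).resolve_left h).choose ((hcov z').resolve_left h').choose)) := by
      intro z z'
      by_cases h : ∃ x, g₁ x = z <;> by_cases h' : ∃ x, g₁ x = z' <;>
        simp only [h, h', dif_pos, dif_neg, not_false_iff]
      · have e := hd₁ h.choose h'.choose
        rw [h.choose_spec, h'.choose_spec] at e
        exact e
      · have e := hd₁₂ h.choose ((hcov z').resolve_left h').choose
        rw [h.choose_spec, ((hcov z').resolve_left h').choose_spec] at e
        exact e
      · have e := hd₁₂ h'.choose ((hcov z).resolve_left h).choose
        rw [h'.choose_spec, ((hcov z).resolve_left h).choose_spec] at e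
        rw [W.dist_comm, e, Y₁.dist_comm, Y₂.dist_comm, add_comm]
      · have e := hd₂ ((hcov z).resolve_left h).choose ((hcov z').resolve_left h').choose
        rw [((hcov z).resolve_left h).choose_spec, ((hcov z').resolve_left h').choose_spec] at e
        exact e
    apply stochEmbed_of_index (Fin N₁ × Fin N₂) S F (fun ij => p₁ ij.1 * p₂ ij.2)
    · intro ij
      exact OneSumClosure.sum (hZ₁ ij.1) (hZ₂ ij.2) (isOneSum_oneSum _ _ _ _)
    · intro ij; exact mul_nonneg (hp₁ ij.1) (hp₂ ij.2)
    · rw [Fintype.sum_prod_type]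
      simp_rw [← Finset.mul_sum, hs₂, mul_one, hs₁]
    · intro ij z z'
      rw [distF ij z z', distW z z']
      by_cases h : ∃ x, g₁ x = z <;> by_cases h' : ∃ x, g₁ x = z' <;>
        simp only [h, h', dif_pos, dif_neg, not_false_iff]
      · exact hnc₁ ij.1 _ _
      · exact add_le_add (hnc₁ ij.1 _ _) (hnc₂ ij.2 _ _)
      · exact add_le_add (hnc₂ ij.2 _ _) (hnc₁ ij.1 _ _)
      · exact hnc₂ ij.2 _ _
    · intro z z'
      rw [distW z z']
      simp_rw [distF _ z z']
      by_cases h : ∃ x, g₁ x = z <;> by_cases h' : ∃ x, g₁ x = z' <;>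
        simp only [h, h', dif_pos, dif_neg, not_false_iff]
      · have key : ∑ ij : Fin N₁ × Fin N₂, p₁ ij.1 * p₂ ij.2
            * (Z₁ ij.1).dist (f₁ ij.1 h.choose) (f₁ ij.1 h'.choose)
            = ∑ i, p₁ i * (Z₁ i).dist (f₁ i h.choose) (f₁ i h'.choose) := by
          have := prod_sum_helper hs₁ hs₂
            (fun i => (Z₁ i).dist (f₁ i h.choose) (f₁ i h'.choose)) (fun _ => (0 : ℝ))
          simpa using this
        rw [key]
        exact hav₁ _ _
      · rw [prod_sum_helper hs₁ hs₂
          (fun i => (Z₁ i).dist (f₁ i h.choose) (f₁ i v₁))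
          (fun j => (Z₂ j).dist (f₂ j v₂) (f₂ j ((hcov z').resolve_left h').choose)), mul_add]
        exact add_le_add (hav₁ _ _) (hav₂ _ _)
      · have comm : ∀ ij : Fin N₁ × Fin N₂,
            p₁ ij.1 * p₂ ij.2 * ((Z₂ ij.2).dist (f₂ ij.2 ((hcov z).resolve_left h).choose)
                (f₂ ij.2 v₂) + (Z₁ ij.1).dist (f₁ ij.1 v₁) (f₁ ij.1 h'.choose))
            = p₁ ij.1 * p₂ ij.2 * ((Z₁ ij.1).dist (f₁ ij.1 v₁) (f₁ ij.1 h'.choose)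
                + (Z₂ ij.2).dist (f₂ ij.2 ((hcov z).resolve_left h).choose) (f₂ ij.2 v₂)) := by
          intro ij; ring
        rw [Finset.sum_congr rfl (fun ij _ => comm ij),
          prod_sum_helper hs₁ hs₂
            (fun i => (Z₁ i).dist (f₁ i v₁) (f₁ i h'.choose))
            (fun j => (Z₂ j).dist (f₂ j ((hcov z).resolve_left h).choose) (f₂ j v₂)), mul_add]
        linarith [hav₁ v₁ h'.choose, hav₂ ((hcov z).resolve_left h).choose v₂]
      · have key : ∑ ij : Fin N₁ × Fin N₂, p₁ ij.1 * p₂ ij.2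
            * (Z₂ ij.2).dist (f₂ ij.2 ((hcov z).resolve_left h).choose)
              (f₂ ij.2 ((hcov z').resolve_left h').choose)
            = ∑ j, p₂ j * (Z₂ j).dist (f₂ j ((hcov z).resolve_left h).choose)
              (f₂ j ((hcov z').resolve_left h').choose) := by
          have := prod_sum_helper hs₁ hs₂ (fun _ => (0 : ℝ))
            (fun j => (Z₂ j).dist (f₂ j ((hcov z).resolve_left h).choose)
              (f₂ j ((hcov z').resolve_left h').choose))
          simpa using this
        rw [key]
        exact hav₂ _ _

/-- Composition Lemma. If a finite metric space `X` admits a stochastic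
`α`-embedding into `⊕₁(𝒳 ∪ 𝒴)`, and every member of `𝒳` admits a stochastic `β`-embedding
into `𝒵`, then `X` admits a stochastic `α·β`-embedding into `⊕₁(𝒵 ∪ 𝒴)`. -/
theorem statement1 (X : Type) [MetricSpace X] [Fintype X]
    (𝒳 𝒴 𝒵 : Set FinMetric) (α β : ℝ) (hα : 1 ≤ α) (hβ : 1 ≤ β)
    (hX : StochEmbed X dist {Z | OneSumClosure (𝒳 ∪ 𝒴) Z} α)
    (h𝒳 : ∀ Y ∈ 𝒳, StochEmbed Y.carrier Y.dist 𝒵 β) :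
    StochEmbed X dist {Z | OneSumClosure (𝒵 ∪ 𝒴) Z} (α * β) := by
  classical
  obtain ⟨N, Y, f, p, hY, hp, hs, hnc, hav⟩ := hX
  have hkey := fun i => key_lemma 𝒳 𝒴 𝒵 β hβ h𝒳 (Y i) (hY i)
  choose M Z g q hZ hq hqs hnc' hav' using hkey
  apply stochEmbed_of_index ((i : Fin N) × Fin (M i)) (fun ik => Z ik.1 ik.2)
    (fun ik x => g ik.1 ik.2 (f ik.1 x)) (fun ik => p ik.1 * q ik.1 ik.2)
  · exact fun ik => hZ ik.1 ik.2
  · exact fun ik => mul_nonneg (hp ik.1) (hq ik.1 ik.2)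
  · rw [← Finset.univ_sigma_univ, Finset.sum_sigma]
    simp_rw [← Finset.mul_sum, hqs, mul_one]
    exact hs
  · intro ik x y
    exact le_trans (hnc ik.1 x y) (hnc' ik.1 ik.2 _ _)
  · intro x y
    rw [← Finset.univ_sigma_univ, Finset.sum_sigma]
    have step1 : ∀ i : Fin N,
        ∑ k, p i * q i k * (Z i k).dist (g i k (f i x)) (g i k (f i y))
          ≤ p i * (β * (Y i).dist (f i x) (f i y)) := by
      intro i
      have : ∑ k, p i * q i k * (Z i k).dist (g i k (f i x)) (g i k (f i y))
          = p i * ∑ k, q i k * (Z i k).dist (g i k (f i x)) (g i k (f i y)) := by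
        rw [Finset.mul_sum]
        congr 1; ext k; ring
      rw [this]
      exact mul_le_mul_of_nonneg_left (hav' i (f i x) (f i y)) (hp i)
    calc ∑ i : Fin N, ∑ k, p i * q i k * (Z i k).dist (g i k (f i x)) (g i k (f i y))
        ≤ ∑ i, p i * (β * (Y i).dist (f i x) (f i y)) :=
          Finset.sum_le_sum fun i _ => step1 i
      _ = β * ∑ i, p i * (Y i).dist (f i x) (f i y) := by
          rw [Finset.mul_sum]; congr 1; ext i; ring
      _ ≤ β * (α * dist x y) :=
          mul_le_mul_of_nonneg_left (hav x y) (le_trans zero_le_one hβ)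
      _ = α * β * dist x y := by ring
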